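/- Let U be a complex Hilbert space, φ(w) = w/(1 - ‖w‖²) on the open unit ball, and P ∈ L(U) with P + P* ≥ c·I for some c > 0. Then for every r ∈ U the equation w = r - Pφ(w) has a unique solution w in the open unit ball. -/

import Mathlib

open scoped InnerProductSpace

lemma surj_of_coercive {U : Type*} [NormedAddCommGroup U] [InnerProductSpace ℂ U]
    [CompleteSpace U] (A : U →L[ℂ] U) (k : ℝ) (hk : 0 < k)
    (h : ∀ x : U, k * ‖x‖ ^ 2 ≤ (⟪x, A x⟫_ℂ).re) : Function.Surjective A := by
  have hu : IsUnit A := by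
    apply ContinuousLinearMap.isUnit_of_forall_le_norm_inner_map A (c := ⟨k, hk.le⟩)
    · exact_mod_cast hk
    · intro x
      have h1 : (⟪x, A x⟫_ℂ).re ≤ ‖⟪A x, x⟫_ℂ‖ := by
        calc (⟪x, A x⟫_ℂ).re ≤ ‖⟪x, A x⟫_ℂ‖ := Complex.re_le_norm _
        _ = ‖⟪A x, x⟫_ℂ‖ := by
            rw [← inner_conj_symm x (A x)]; exact Complex.norm_conj _
        _ = ‖⟪A x, x⟫_ℂ‖ := rfl
      calc ‖x‖ ^ 2 * (⟨k, hk.le⟩ : NNReal) = k * ‖x‖ ^ 2 := by push_cast; ring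
      _ ≤ ‖⟪A x, x⟫_ℂ‖ := (h x).trans h1
  rcases hu with ⟨u, hu⟩
  intro y
  refine ⟨(u⁻¹ : (U →L[ℂ] U)ˣ).1 y, ?_⟩
  have : (A * (u⁻¹ : (U →L[ℂ] U)ˣ).1) y = y := by
    rw [← hu, ← Units.val_mul, mul_inv_cancel]; rfl
  simpa using this


lemma mono_aux {U : Type*} [NormedAddCommGroup U] [InnerProductSpace ℂ U]
    (w₁ w₂ : U) (g₁ g₂ : ℝ) (h₁ : ‖w₁‖ < 1) (h₂ : ‖w₂‖ < 1)
    (hg₁ : g₁ = (1 - ‖w₁‖ ^ 2)⁻¹) (hg₂ : g₂ = (1 - ‖w₂‖ ^ 2)⁻¹) :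
    0 ≤ (⟪(g₁ : ℂ) • w₁ - (g₂ : ℂ) • w₂, w₁ - w₂⟫_ℂ).re := by
  have ha0 : (0:ℝ) ≤ ‖w₁‖ := norm_nonneg _
  have hb0 : (0:ℝ) ≤ ‖w₂‖ := norm_nonneg _
  have hA : (0:ℝ) < 1 - ‖w₁‖ ^ 2 := by nlinarith
  have hB : (0:ℝ) < 1 - ‖w₂‖ ^ 2 := by nlinarith
  have hg₁0 : 0 < g₁ := by rw [hg₁]; positivity
  have hg₂0 : 0 < g₂ := by rw [hg₂]; positivity
  have h21 : (⟪w₂, w₁⟫_ℂ).re = (⟪w₁, w₂⟫_ℂ).re := inner_re_symm (𝕜 := ℂ) w₂ w₁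
  have h11 : (⟪w₁, w₁⟫_ℂ).re = ‖w₁‖ ^ 2 := by
    rw [inner_self_eq_norm_sq_to_K]; simp [← Complex.ofReal_pow]
  have h22 : (⟪w₂, w₂⟫_ℂ).re = ‖w₂‖ ^ 2 := by
    rw [inner_self_eq_norm_sq_to_K]; simp [← Complex.ofReal_pow]
  have hexp : (⟪(g₁ : ℂ) • w₁ - (g₂ : ℂ) • w₂, w₁ - w₂⟫_ℂ).re
      = g₁ * ‖w₁‖ ^ 2 + g₂ * ‖w₂‖ ^ 2 - (g₁ + g₂) * (⟪w₁, w₂⟫_ℂ).re := by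
    simp only [inner_sub_left, inner_sub_right, inner_smul_left,
      Complex.conj_ofReal, Complex.sub_re, Complex.re_ofReal_mul]
    rw [h11, h22, h21]; ring
  rw [hexp]
  have hs : (⟪w₁, w₂⟫_ℂ).re ≤ ‖w₁‖ * ‖w₂‖ := by
    refine le_trans (Complex.re_le_norm _) ?_
    exact norm_inner_le_norm _ _
  have key : g₁ * ‖w₁‖ ^ 2 + g₂ * ‖w₂‖ ^ 2 - (g₁ + g₂) * (‖w₁‖ * ‖w₂‖)
      = g₁ * g₂ * ((‖w₁‖ - ‖w₂‖) ^ 2 * (1 + ‖w₁‖ * ‖w₂‖)) := by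
    rw [hg₁, hg₂]; field_simp; ring
  have hkey0 : 0 ≤ g₁ * g₂ * ((‖w₁‖ - ‖w₂‖) ^ 2 * (1 + ‖w₁‖ * ‖w₂‖)) := by positivity
  nlinarith [mul_le_mul_of_nonneg_left hs (by positivity : (0:ℝ) ≤ g₁ + g₂)]

lemma uniq_aux {U : Type*} [NormedAddCommGroup U] [InnerProductSpace ℂ U]
    (P : U →L[ℂ] U) (c : ℝ) (hc : 0 < c)
    (hP : ∀ x : U, c / 2 * ‖x‖ ^ 2 ≤ (⟪x, P x⟫_ℂ).re)
    (r : U) {w₁ w₂ : U} (h₁ : ‖w₁‖ < 1) (h₂ : ‖w₂‖ < 1)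
    (e₁ : w₁ = r - P (((1 - ‖w₁‖ ^ 2 : ℝ) : ℂ)⁻¹ • w₁))
    (e₂ : w₂ = r - P (((1 - ‖w₂‖ ^ 2 : ℝ) : ℂ)⁻¹ • w₂)) : w₁ = w₂ := by
  have hcast₁ : ((1 - ‖w₁‖ ^ 2 : ℝ) : ℂ)⁻¹ = (((1 - ‖w₁‖ ^ 2)⁻¹ : ℝ) : ℂ) := by
    push_cast; ring
  have hcast₂ : ((1 - ‖w₂‖ ^ 2 : ℝ) : ℂ)⁻¹ = (((1 - ‖w₂‖ ^ 2)⁻¹ : ℝ) : ℂ) := by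
    push_cast; ring
  set d : U := (((1 - ‖w₁‖ ^ 2)⁻¹ : ℝ) : ℂ) • w₁ - (((1 - ‖w₂‖ ^ 2)⁻¹ : ℝ) : ℂ) • w₂ with hd
  have hsub : P d = -(w₁ - w₂) := by
    rw [hd, map_sub, ← hcast₁, ← hcast₂]
    have h := congrArg₂ (· - ·) e₁ e₂
    rw [h]; abel
  have hmono := mono_aux w₁ w₂ ((1 - ‖w₁‖ ^ 2)⁻¹) ((1 - ‖w₂‖ ^ 2)⁻¹) h₁ h₂ rfl rfl
  have hcoer := hP d
  rw [hsub] at hcoer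
  simp only [inner_neg_right, Complex.neg_re] at hcoer
  rw [← hd] at hmono
  have hd0 : d = 0 := by
    have h2 : ‖d‖ ^ 2 ≤ 0 := by nlinarith
    have h3 : ‖d‖ = 0 := by nlinarith [sq_nonneg ‖d‖, norm_nonneg d]
    exact norm_eq_zero.mp h3
  have hPd : P d = 0 := by rw [hd0, map_zero]
  have : w₁ - w₂ = 0 := by rw [← neg_eq_zero, ← hsub, hPd]
  exact sub_eq_zero.mp this

section helpers
variable {U : Type*} [NormedAddCommGroup U] [InnerProductSpace ℂ U] [CompleteSpace U]

set_option linter.unusedSectionVars false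

lemma coA (P : U →L[ℂ] U) (c : ℝ) (hP : ∀ x : U, c / 2 * ‖x‖ ^ 2 ≤ (⟪x, P x⟫_ℂ).re)
    (t : ℝ) (ht : 0 ≤ t) (x : U) :
    c / 2 * ‖x‖ ^ 2 ≤ (⟪x, (t : ℂ) • x + P x⟫_ℂ).re := by
  have h1 : ⟪x, (t : ℂ) • x + P x⟫_ℂ = (t : ℂ) * ⟪x, x⟫_ℂ + ⟪x, P x⟫_ℂ := by
    rw [inner_add_right, inner_smul_right]
  have h2 : ⟪x, x⟫_ℂ = ((‖x‖ ^ 2 : ℝ) : ℂ) := by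
    rw [inner_self_eq_norm_sq_to_K]; norm_cast
  rw [h1, h2]
  have h3 : ((t : ℂ) * ((‖x‖ ^ 2 : ℝ) : ℂ) + ⟪x, P x⟫_ℂ).re
      = t * ‖x‖ ^ 2 + (⟪x, P x⟫_ℂ).re := by
    rw [Complex.add_re, ← Complex.ofReal_mul, Complex.ofReal_re]
  rw [h3]
  nlinarith [hP x, mul_nonneg ht (sq_nonneg ‖x‖)]

-- division helper
lemma my_div_helper {c x y : ℝ} (hc : 0 < c) (hx : 0 ≤ x) (hy : 0 ≤ y)
    (h : c / 2 * x ^ 2 ≤ x * y) : x ≤ 2 / c * y := by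
  rcases eq_or_lt_of_le hx with h0 | h0
  · rw [← h0]; positivity
  · have h2 : c * x ≤ 2 * y := by nlinarith
    rw [div_mul_eq_mul_div, le_div_iff₀ hc]
    linarith

lemma hsol (P : U →L[ℂ] U) (c : ℝ) (hc : 0 < c)
    (hP : ∀ x : U, c / 2 * ‖x‖ ^ 2 ≤ (⟪x, P x⟫_ℂ).re) (r : U) (t : ℝ) (ht : 0 ≤ t) :
    ∃ v : U, (t : ℂ) • v + P v = r := by
  have key := surj_of_coercive ((t : ℂ) • (ContinuousLinearMap.id ℂ U) + P) (c / 2)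
    (by positivity) (fun x => by
      simpa using coA P c hP t ht x) r
  obtain ⟨v, hv⟩ := key
  exact ⟨v, by simpa using hv⟩
end helpers


/-- If `P + P* ≥ c·I` with `c > 0`, then for every `r ∈ U` the equation
`w = r - Pφ(w)`, with `φ(w) = w/(1 - ‖w‖²)`, has a unique solution in the
open unit ball. -/
theorem stmt_4 {U : Type*} [NormedAddCommGroup U] [InnerProductSpace ℂ U] [CompleteSpace U]
    (φ : U → U) (hφ : ∀ w : U, φ w = ((1 - ‖w‖ ^ 2 : ℝ) : ℂ)⁻¹ • w)
    (P : U →L[ℂ] U) (c : ℝ) (hc : 0 < c)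
    (hP : ∀ x : U, c / 2 * ‖x‖ ^ 2 ≤ (⟪x, P x⟫_ℂ).re)
    (r : U) :
    ∃! w : U, ‖w‖ < 1 ∧ w = r - P (φ w) := by
  -- choose solutions of (max t 0) • v + P v = r
  have hex : ∀ t : ℝ, ∃ v : U, ((max t 0 : ℝ) : ℂ) • v + P v = r :=
    fun t => hsol P c hc hP r (max t 0) (le_max_right _ _)
  choose V hV using hex
  -- uniform bound
  have hbound : ∀ t : ℝ, ‖V t‖ ≤ 2 / c * ‖r‖ := by
    intro t
    have h1 := coA P c hP (max t 0) (le_max_right _ _) (V t)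
    rw [hV t] at h1
    have h2 : (⟪V t, r⟫_ℂ).re ≤ ‖V t‖ * ‖r‖ := by
      refine le_trans (Complex.re_le_norm _) ?_
      exact norm_inner_le_norm _ _
    exact my_div_helper hc (norm_nonneg _) (norm_nonneg _) (h1.trans h2)
  -- Lipschitz estimate
  have hlip : ∀ s t : ℝ, ‖V t - V s‖ ≤ 2 / c * (|t - s| * ‖V s‖) := by
    intro s t
    have e : ((max t 0 : ℝ) : ℂ) • V t + P (V t) = ((max s 0 : ℝ) : ℂ) • V s + P (V s) :=
      (hV t).trans (hV s).symm
    have heq : ((max t 0 : ℝ) : ℂ) • (V t - V s) + P (V t - V s)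
        = (((max s 0 : ℝ) : ℂ) - ((max t 0 : ℝ) : ℂ)) • V s := by
      calc ((max t 0 : ℝ) : ℂ) • (V t - V s) + P (V t - V s)
          = (((max t 0 : ℝ) : ℂ) • V t + P (V t)) - (((max t 0 : ℝ) : ℂ) • V s + P (V s)) := by
            rw [map_sub, smul_sub]; abel
        _ = (((max s 0 : ℝ) : ℂ) • V s + P (V s)) - (((max t 0 : ℝ) : ℂ) • V s + P (V s)) := by
            rw [e]
        _ = (((max s 0 : ℝ) : ℂ) - ((max t 0 : ℝ) : ℂ)) • V s := by
            rw [sub_smul]; abel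
    have h1 := coA P c hP (max t 0) (le_max_right _ _) (V t - V s)
    rw [heq] at h1
    have h2 : (⟪V t - V s, (((max s 0 : ℝ) : ℂ) - ((max t 0 : ℝ) : ℂ)) • V s⟫_ℂ).re
        ≤ ‖V t - V s‖ * (|t - s| * ‖V s‖) := by
      refine le_trans (Complex.re_le_norm _) ?_
      refine le_trans (norm_inner_le_norm _ _) ?_
      rw [norm_smul]
      have h3 : ‖(((max s 0 : ℝ) : ℂ) - ((max t 0 : ℝ) : ℂ))‖ ≤ |t - s| := by
        rw [← Complex.ofReal_sub, Complex.norm_real, Real.norm_eq_abs]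
        rw [abs_sub_comm t s]
        exact abs_max_sub_max_le_abs _ _ _
      have := mul_le_mul_of_nonneg_right h3 (norm_nonneg (V s))
      nlinarith [norm_nonneg (V t - V s), mul_nonneg (abs_nonneg (s - t)) (norm_nonneg (V s))]
    exact my_div_helper hc (norm_nonneg _) (by positivity) (h1.trans h2)
  -- V is Lipschitz, hence continuous
  have hVcont : Continuous V := by
    rcases eq_or_lt_of_le (norm_nonneg r) with hr0 | hr0
    · have : ∀ t, V t = V 0 := by
        intro t
        have h1 := hlip 0 t
        have hb := hbound 0
        have hb0 : ‖V 0‖ = 0 := by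
          refine le_antisymm ?_ (norm_nonneg _)
          rw [← hr0, mul_zero] at hb; exact hb
        rw [hb0, mul_zero, mul_zero] at h1
        have h0 : V t - V 0 = 0 := norm_le_zero_iff.mp h1
        exact sub_eq_zero.mp h0
      have hV0 : V = fun _ => V 0 := funext this
      rw [hV0]
      exact continuous_const
    · apply (LipschitzWith.of_dist_le_mul (K := ⟨2 / c * (2 / c * ‖r‖), by positivity⟩)
        (f := V) ?_).continuous
      intro t s
      have h1 := hlip s t
      have h2 := hbound s
      rw [dist_eq_norm, Real.dist_eq]
      push_cast
      calc ‖V t - V s‖ ≤ 2 / c * (|t - s| * ‖V s‖) := h1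
        _ ≤ 2 / c * (2 / c * ‖r‖) * |t - s| := by
            nlinarith [abs_nonneg (t - s), norm_nonneg (V s), mul_le_mul_of_nonneg_left h2 (abs_nonneg (t-s))]
  -- the scalar function
  set f : ℝ → ℝ := fun t => t ^ 2 * ‖V t‖ ^ 2 + t - 1 with hf
  have hfcont : Continuous f := by
    apply Continuous.sub
    apply Continuous.add
    · exact (continuous_pow 2).mul ((hVcont.norm).pow 2)
    · exact continuous_id
    · exact continuous_const
  have hf0 : f 0 = -1 := by simp [hf]
  have hf1 : 0 ≤ f 1 := by
    have h1 : f 1 = ‖V 1‖ ^ 2 := by simp [hf]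
    rw [h1]; positivity
  have hmem : (0 : ℝ) ∈ Set.Icc (f 0) (f 1) := by
    rw [hf0]; exact ⟨by norm_num, hf1⟩
  obtain ⟨t₀, ht₀, hft₀⟩ := intermediate_value_Icc (by norm_num : (0:ℝ) ≤ 1)
    hfcont.continuousOn hmem
  have ht₀pos : 0 < t₀ := by
    rcases eq_or_lt_of_le ht₀.1 with h0 | h0
    · exfalso; rw [← h0] at hft₀; rw [hf0] at hft₀; norm_num at hft₀
    · exact h0
  have hmax : max t₀ 0 = t₀ := max_eq_left ht₀pos.le
  have heq : (t₀ : ℂ) • V t₀ + P (V t₀) = r := by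
    have := hV t₀; rwa [hmax] at this
  set v : U := V t₀ with hv
  set w : U := (t₀ : ℂ) • v with hw
  have hwnorm : ‖w‖ ^ 2 = 1 - t₀ := by
    have h1 : ‖w‖ = t₀ * ‖v‖ := by
      rw [hw, norm_smul, Complex.norm_real, Real.norm_eq_abs, abs_of_pos ht₀pos]
    have h2 : t₀ ^ 2 * ‖v‖ ^ 2 + t₀ - 1 = 0 := hft₀
    rw [h1]; nlinarith
  have hwlt : ‖w‖ < 1 := by nlinarith [norm_nonneg w, ht₀pos]
  have hone : (1 : ℝ) - ‖w‖ ^ 2 = t₀ := by linarith [hwnorm]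
  have hφw : φ w = v := by
    have hne : (t₀ : ℂ) ≠ 0 := by exact_mod_cast ne_of_gt ht₀pos
    rw [hφ, hone, hw, smul_smul, inv_mul_cancel₀ hne, one_smul]
  have hwsol : w = r - P (φ w) := by
    rw [hφw, ← heq]; abel
  refine ⟨w, ⟨hwlt, hwsol⟩, ?_⟩
  rintro y ⟨hy1, hy2⟩
  rw [hφ y] at hy2
  rw [hφ w] at hwsol
  exact uniq_aux P c hc hP r hy1 hwlt hy2 hwsol
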